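/- Let G be a graph with a universal vertex u and star spanning tree T_s centered at u. Then \cap_G(T_s) = \sum_{v in V \ {u}} binomial(d(v) - 1, 2), where d(v) is the degree of v in G. -/

import Mathlib

open SimpleGraph Finset
open scoped Classical

/-- `T` is a spanning tree of `G`. -/
def IsSpanningTree {V : Type*} (G T : SimpleGraph V) : Prop :=
  T ≤ G ∧ T.Connected ∧ T.IsAcyclic

/-- Tree edge `e` lies on the fundamental cycle of `f` with respect to `T`:
deleting `e` from `T` disconnects the endpoints of `f`. -/
def OnFundCycle {V : Type*} (T : SimpleGraph V) (e f : Sym2 V) : Prop :=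
  ∃ v w : V, f = s(v, w) ∧ ¬ (T.deleteEdges {e}).Reachable v w

/-- The bond of a tree edge `e`: all edges of `G` joining the two components of `T - e`. -/
def Bond {V : Type*} (G T : SimpleGraph V) (e : Sym2 V) : Set (Sym2 V) :=
  {f | f ∈ G.edgeSet ∧ OnFundCycle T e f}

/-- The fundamental cycles of `f` and `f'` w.r.t. `T` share at least one tree edge. -/
def CyclesMeet {V : Type*} (T : SimpleGraph V) (f f' : Sym2 V) : Prop :=
  ∃ e ∈ T.edgeSet, OnFundCycle T e f ∧ OnFundCycle T e f'

/-- `∩_G(T)`: the number of unordered pairs of distinct non-tree edges whose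
fundamental cycles w.r.t. `T` share at least one tree edge. -/
noncomputable def interT {V : Type*} [Fintype V] (G T : SimpleGraph V) : ℕ :=
  (((G.edgeSet \ T.edgeSet).toFinset.offDiag).filter
    (fun p => CyclesMeet T p.1 p.2)).card / 2

/-- `∩(G)`: the intersection number, the minimum of `∩_G(T)` over spanning trees `T`. -/
noncomputable def interNum {V : Type*} [Fintype V] (G : SimpleGraph V) : ℕ :=
  sInf {k | ∃ T : SimpleGraph V, IsSpanningTree G T ∧ interT G T = k}

section Aux
variable {V : Type*} [DecidableEq V]
set_option linter.unusedSectionVars false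

lemma star_adj (u a b : V) :
    (SimpleGraph.fromRel (fun x (_ : V) => x = u)).Adj a b ↔ a ≠ b ∧ (a = u ∨ b = u) := by
  simp [SimpleGraph.fromRel_adj]

lemma star_edge (u : V) (e : Sym2 V) :
    e ∈ (SimpleGraph.fromRel (fun x (_ : V) => x = u)).edgeSet ↔
      ∃ x, x ≠ u ∧ e = s(u, x) := by
  induction e using Sym2.ind with
  | _ a b =>
    rw [SimpleGraph.mem_edgeSet, star_adj]
    constructor
    · rintro ⟨hne, h | h⟩
      · exact ⟨b, by subst h; exact hne.symm, by subst h; rfl⟩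
      · exact ⟨a, by subst h; exact hne, by subst h; rw [Sym2.eq_swap]⟩
    · rintro ⟨x, hx, he⟩
      rw [Sym2.eq_iff] at he
      rcases he with ⟨rfl, rfl⟩ | ⟨rfl, rfl⟩
      · exact ⟨hx.symm, Or.inl rfl⟩
      · exact ⟨hx, Or.inr rfl⟩

lemma star_del_not_reach (u x v w : V) (hx : x ≠ u) (hv : v ≠ u) (hw : w ≠ u)
    (hvw : v ≠ w) :
    (¬ ((SimpleGraph.fromRel (fun a (_ : V) => a = u)).deleteEdges {s(u, x)}).Reachable v w)
      ↔ (x = v ∨ x = w) := by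
  set T := SimpleGraph.fromRel (fun a (_ : V) => a = u) with hT
  have key : ∀ a : V, a ≠ u → x ≠ a →
      (T.deleteEdges {s(u, x)}).Adj a u := by
    intro a ha hxa
    rw [SimpleGraph.deleteEdges_adj]
    refine ⟨(star_adj u a u).2 ⟨ha, Or.inr rfl⟩, ?_⟩
    simp only [Set.mem_singleton_iff, Sym2.eq_iff]
    rintro (⟨rfl, rfl⟩ | ⟨h1, _⟩)
    · exact ha rfl
    · exact hxa h1.symm
  have isol : ∀ a b : V, a ≠ u → x = a → ¬ (T.deleteEdges {s(u, x)}).Adj a b := by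
    intro a b ha hxa hadj
    rw [SimpleGraph.deleteEdges_adj] at hadj
    obtain ⟨hadj, hmem⟩ := hadj
    rw [star_adj] at hadj
    obtain ⟨hne, h | h⟩ := hadj
    · exact ha h
    · subst h; subst hxa
      exact hmem (by simp [Sym2.eq_swap])
  constructor
  · intro h
    by_contra hc
    push_neg at hc
    exact h ((key v hv (fun e => hc.1 e)).reachable.trans
      (key w hw (fun e => hc.2 e)).reachable.symm)
  · rintro (rfl | rfl)
    · rintro ⟨p⟩
      cases p with
      | nil => exact hvw rfl
      | cons hadj _ => exact isol _ _ hv rfl hadj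
    · intro h
      obtain ⟨p⟩ := h.symm
      cases p with
      | nil => exact hvw rfl
      | cons hadj _ => exact isol _ _ hw rfl hadj

lemma onFundCycle_iff (T : SimpleGraph V) (e : Sym2 V) (v w : V) :
    OnFundCycle T e s(v, w) ↔ ¬ (T.deleteEdges {e}).Reachable v w := by
  constructor
  · rintro ⟨a, b, hab, hr⟩
    rw [Sym2.eq_iff] at hab
    rcases hab with ⟨rfl, rfl⟩ | ⟨rfl, rfl⟩
    · exact hr
    · exact fun h => hr h.symm
  · exact fun h => ⟨v, w, rfl, h⟩

lemma cyclesMeet_iff (u v w v' w' : V) (hv : v ≠ u) (hw : w ≠ u) (hv' : v' ≠ u)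
    (hw' : w' ≠ u) (hvw : v ≠ w) (hvw' : v' ≠ w') :
    CyclesMeet (SimpleGraph.fromRel (fun a (_ : V) => a = u)) s(v, w) s(v', w') ↔
      ∃ x, x ≠ u ∧ (x = v ∨ x = w) ∧ (x = v' ∨ x = w') := by
  constructor
  · rintro ⟨e, he, h1, h2⟩
    rw [star_edge] at he
    obtain ⟨x, hx, rfl⟩ := he
    rw [onFundCycle_iff, star_del_not_reach u x v w hx hv hw hvw] at h1
    rw [onFundCycle_iff, star_del_not_reach u x v' w' hx hv' hw' hvw'] at h2
    exact ⟨x, hx, h1, h2⟩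
  · rintro ⟨x, hx, h1, h2⟩
    refine ⟨s(u, x), (star_edge u _).2 ⟨x, hx, rfl⟩, ?_, ?_⟩
    · rw [onFundCycle_iff, star_del_not_reach u x v w hx hv hw hvw]; exact h1
    · rw [onFundCycle_iff, star_del_not_reach u x v' w' hx hv' hw' hvw']; exact h2

lemma nontree_decomp (G : SimpleGraph V) (u : V) (f : Sym2 V)
    (h1 : f ∈ G.edgeSet)
    (h2 : f ∉ (SimpleGraph.fromRel (fun x (_ : V) => x = u)).edgeSet) :
    ∃ v w, f = s(v, w) ∧ G.Adj v w ∧ v ≠ u ∧ w ≠ u := by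
  induction f using Sym2.ind with
  | _ a b =>
    rw [SimpleGraph.mem_edgeSet] at h1
    rw [SimpleGraph.mem_edgeSet, star_adj] at h2
    push_neg at h2
    exact ⟨a, b, rfl, h1, fun h => (h2 h1.ne).1 h, fun h => (h2 h1.ne).2 h⟩

lemma two_mul_choose_two (n : ℕ) : n * (n - 1) = 2 * n.choose 2 := by
  have h := Nat.choose_two_right n
  have he : 2 ∣ n * (n - 1) := by
    cases n with
    | zero => simp
    | succ m => simpa [Nat.mul_comm] using (Nat.even_mul_succ_self m).two_dvd
  omega

end Aux

/-- For a graph with universal vertex `u` and star spanning tree `T_s` centered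
at `u`, `∩_G(T_s) = ∑_{v ≠ u} binom(d(v) - 1, 2)`. -/
theorem star_formula {V : Type*} [Fintype V] [DecidableEq V]
    (G : SimpleGraph V) (hG : G.Connected) (u : V)
    (hu : ∀ w, w ≠ u → G.Adj u w) :
    interT G (SimpleGraph.fromRel (fun x _ => x = u)) =
      ∑ v ∈ Finset.univ.erase u, (G.degree v - 1).choose 2 := by
  classical
  set T := SimpleGraph.fromRel (fun x (_ : V) => x = u) with hT
  set S := (G.edgeSet \ T.edgeSet).toFinset with hS
  have hmem : ∀ f ∈ S, ∃ v w, f = s(v, w) ∧ G.Adj v w ∧ v ≠ u ∧ w ≠ u := by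
    intro f hf
    rw [hS, Set.mem_toFinset, Set.mem_diff] at hf
    exact nontree_decomp G u f hf.1 hf.2
  have hset : S.offDiag.filter (fun p => CyclesMeet T p.1 p.2)
      = (univ.erase u).biUnion (fun x => (S.filter (fun f => x ∈ f)).offDiag) := by
    ext p
    simp only [mem_filter, mem_offDiag, mem_biUnion, mem_erase, mem_univ, and_true]
    constructor
    · rintro ⟨⟨h1, h2, hne⟩, hcm⟩
      obtain ⟨v, w, hp1, hadj, hv, hw⟩ := hmem p.1 h1
      obtain ⟨v', w', hp2, hadj', hv', hw'⟩ := hmem p.2 h2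
      rw [hp1, hp2, cyclesMeet_iff u v w v' w' hv hw hv' hw' hadj.ne hadj'.ne] at hcm
      obtain ⟨x, hx, hx1, hx2⟩ := hcm
      refine ⟨x, hx, ⟨h1, ?_⟩, ⟨h2, ?_⟩, hne⟩
      · rw [hp1, Sym2.mem_iff]; exact hx1
      · rw [hp2, Sym2.mem_iff]; exact hx2
    · rintro ⟨x, hx, hq1, hq2, hne⟩
      refine ⟨⟨hq1.1, hq2.1, hne⟩, ?_⟩
      obtain ⟨v, w, hp1, hadj, hv, hw⟩ := hmem p.1 hq1.1
      obtain ⟨v', w', hp2, hadj', hv', hw'⟩ := hmem p.2 hq2.1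
      rw [hp1, hp2, cyclesMeet_iff u v w v' w' hv hw hv' hw' hadj.ne hadj'.ne]
      refine ⟨x, hx, ?_, ?_⟩
      · have := hq1.2; rw [hp1, Sym2.mem_iff] at this; exact this
      · have := hq2.2; rw [hp2, Sym2.mem_iff] at this; exact this
  have hdisj : ∀ x ∈ univ.erase u, ∀ y ∈ univ.erase u, x ≠ y →
      Disjoint ((S.filter (fun f => x ∈ f)).offDiag)
        ((S.filter (fun f => y ∈ f)).offDiag) := by
    intro x _ y _ hxy
    rw [Finset.disjoint_left]
    intro p hp hp'
    rw [mem_offDiag] at hp hp'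
    obtain ⟨ha, hb, hne⟩ := hp
    obtain ⟨ha', hb', _⟩ := hp'
    rw [mem_filter] at ha hb ha' hb'
    have e1 : p.1 = s(x, y) := (Sym2.mem_and_mem_iff hxy).1 ⟨ha.2, ha'.2⟩
    have e2 : p.2 = s(x, y) := (Sym2.mem_and_mem_iff hxy).1 ⟨hb.2, hb'.2⟩
    exact hne (e1.trans e2.symm)
  have hcard : ∀ x, x ≠ u → (S.filter (fun f => x ∈ f)).card = G.degree x - 1 := by
    intro x hx
    have himg : S.filter (fun f => x ∈ f)
        = ((G.neighborFinset x).erase u).image (fun y => s(x, y)) := by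
      ext f
      simp only [mem_filter, mem_image, mem_erase, mem_neighborFinset]
      constructor
      · rintro ⟨hfS, hxf⟩
        obtain ⟨v, w, rfl, hadj, hv, hw⟩ := hmem f hfS
        rw [Sym2.mem_iff] at hxf
        rcases hxf with rfl | rfl
        · exact ⟨w, ⟨hw, hadj⟩, rfl⟩
        · exact ⟨v, ⟨hv, hadj.symm⟩, Sym2.eq_swap⟩
      · rintro ⟨y, ⟨hy, hadj⟩, rfl⟩
        refine ⟨?_, Sym2.mem_mk_left x y⟩
        rw [hS, Set.mem_toFinset, Set.mem_diff]
        refine ⟨G.mem_edgeSet.2 hadj, ?_⟩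
        rw [star_edge]
        rintro ⟨z, hz, hzz⟩
        rw [Sym2.eq_iff] at hzz
        rcases hzz with ⟨h1, _⟩ | ⟨_, h2⟩
        · exact hx h1
        · exact hy h2
    have hinj : Set.InjOn (fun y => s(x, y)) ((G.neighborFinset x).erase u : Finset V) := by
      intro a _ b _ hab
      exact (Sym2.congr_right).1 hab
    rw [himg, Finset.card_image_of_injOn hinj,
      Finset.card_erase_of_mem (by rw [mem_neighborFinset]; exact (hu x hx).symm),
      SimpleGraph.card_neighborFinset_eq_degree]
  have hbig : (S.offDiag.filter (fun p => CyclesMeet T p.1 p.2)).card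
      = 2 * ∑ v ∈ univ.erase u, (G.degree v - 1).choose 2 := by
    rw [hset, Finset.card_biUnion hdisj, Finset.mul_sum]
    refine Finset.sum_congr rfl fun x hxmem => ?_
    have hx : x ≠ u := (mem_erase.1 hxmem).1
    rw [Finset.offDiag_card, hcard x hx]
    set n := G.degree x - 1
    have h1 : n * n - n = n * (n - 1) := by
      cases n with
      | zero => simp
      | succ m => rw [Nat.mul_succ, Nat.add_sub_cancel]; simp
    rw [h1, two_mul_choose_two]
  have hIT : interT G T = (S.offDiag.filter (fun p => CyclesMeet T p.1 p.2)).card / 2 := by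
    unfold interT
    apply congrArg (fun n : ℕ => n / 2)
    apply congrArg Finset.card
    ext p
    simp only [Finset.mem_filter, Finset.mem_offDiag, Set.mem_toFinset, hS]
  rw [hIT, hbig, Nat.mul_div_cancel_left _ (by norm_num : 0 < 2)]
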